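/- arXiv:1502.01217 — 7 statements merged into one kernel-verified Lean document; each statement's English description precedes it below -/
import Mathlib

section
/- Let a₀, a₁, a₂ be real numbers with a₀ > 0, a₁ < 0, and 2a₂³ − 9a₁a₂ + 27a₀ > 2(a₂² − 3a₁)^{3/2}. Then for every real u ≥ 0, u³ + a₂·u² + a₁·u + a₀ > 0; in particular the cubic u³ + a₂·u² + a₁·u + a₀ has no nonnegative real root. -/
/-- If `a₀ > 0`, `a₁ < 0`, and `2a₂³ − 9a₁a₂ + 27a₀ > 2(a₂² − 3a₁)^{3/2}`, then the cubic
`u³ + a₂u² + a₁u + a₀` is strictly positive for every `u ≥ 0`. -/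
theorem cubic_pos_of_nonneg (a₀ a₁ a₂ : ℝ) (h0 : 0 < a₀) (h1 : a₁ < 0)
    (h2 : 2 * a₂ ^ 3 - 9 * a₁ * a₂ + 27 * a₀ > 2 * (a₂ ^ 2 - 3 * a₁) ^ ((3 : ℝ) / 2)) :
    ∀ u : ℝ, 0 ≤ u → 0 < u ^ 3 + a₂ * u ^ 2 + a₁ * u + a₀ := by
  intro u hu
  set D : ℝ := a₂ ^ 2 - 3 * a₁ with hD
  have hDpos : 0 < D := by nlinarith [sq_nonneg a₂]
  set s : ℝ := Real.sqrt D with hs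
  have hs0 : 0 ≤ s := Real.sqrt_nonneg D
  have hs2 : s ^ 2 = D := Real.sq_sqrt hDpos.le
  have hrw : D ^ ((3 : ℝ) / 2) = D * s := by
    rw [show (3 : ℝ) / 2 = 1 + 1 / 2 by norm_num, Real.rpow_add hDpos, Real.rpow_one,
      hs, Real.sqrt_eq_rpow]
  rw [hrw] at h2
  have hsa : 0 < s + a₂ := by nlinarith [sq_nonneg (s + a₂)]
  have hB : 0 ≤ 3 * u + 2 * s + a₂ := by linarith
  nlinarith [mul_nonneg (sq_nonneg (3 * u - s + a₂)) hB, hs2, h2]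
end

section
/- Let l, m, n, l₁, m₁, n₁ be real numbers and set a₀ = n² − (m₁+n₁)², a₁ = m² − 2ln − l₁², a₂ = l² − 2m. Assume a₀ > 0, a₁ < 0, and 2a₂³ − 9a₁a₂ + 27a₀ > 2(a₂² − 3a₁)^{3/2}. Then for every τ ≥ 0 and every real ν, (iν)³ + l·(iν)² + m·(iν) + n + (l₁·(iν) + m₁ + n₁)·exp(−iντ) ≠ 0; that is, the characteristic equation has no purely imaginary roots for any delay τ ≥ 0. -/
open Complex

lemma cubic_pos (a₀ a₁ a₂ s : ℝ) (h0 : 0 < a₀) (h1 : a₁ < 0)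
    (h2 : 2 * a₂ ^ 3 - 9 * a₁ * a₂ + 27 * a₀ > 2 * (a₂ ^ 2 - 3 * a₁) ^ ((3 : ℝ) / 2))
    (hs : 0 ≤ s) : 0 < s ^ 3 + a₂ * s ^ 2 + a₁ * s + a₀ := by
  have hΔ : 0 < a₂ ^ 2 - 3 * a₁ := by nlinarith [sq_nonneg a₂]
  set r := Real.sqrt (a₂ ^ 2 - 3 * a₁) with hrdef
  have hr2 : r ^ 2 = a₂ ^ 2 - 3 * a₁ := Real.sq_sqrt hΔ.le
  have hr : 0 < r := Real.sqrt_pos.mpr hΔ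
  have h3 : (a₂ ^ 2 - 3 * a₁) ^ ((3 : ℝ) / 2) = r ^ 3 := by
    rw [show ((3 : ℝ) / 2) = 1 + 1 / 2 by norm_num, Real.rpow_add hΔ, Real.rpow_one,
      ← Real.sqrt_eq_rpow, ← hrdef, ← hr2]
    ring
  rw [h3] at h2
  have hpos : 0 < a₂ + 2 * r := by nlinarith
  have key : s ^ 3 + a₂ * s ^ 2 + a₁ * s + a₀
      = (2 * a₂ ^ 3 - 9 * a₁ * a₂ + 27 * a₀ - 2 * r ^ 3) / 27
        + (s - (r - a₂) / 3) ^ 2 * (s + (a₂ + 2 * r) / 3) := by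
    linear_combination (s / 3 + a₂ / 9) * hr2
  rw [key]
  have h4 : 0 ≤ (s - (r - a₂) / 3) ^ 2 * (s + (a₂ + 2 * r) / 3) := by
    apply mul_nonneg (sq_nonneg _)
    nlinarith
  nlinarith

/-- Under the conditions of Theorem 3.3(ii), the delayed characteristic equation
`λ³ + lλ² + mλ + n + (l₁λ + m₁ + n₁) e^{-λτ} = 0` has no purely imaginary roots
for any delay `τ ≥ 0`. -/
theorem no_imaginary_roots (l m n l₁ m₁ n₁ : ℝ)
    (h0 : 0 < n ^ 2 - (m₁ + n₁) ^ 2)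
    (h1 : m ^ 2 - 2 * l * n - l₁ ^ 2 < 0)
    (h2 : 2 * (l ^ 2 - 2 * m) ^ 3 - 9 * (m ^ 2 - 2 * l * n - l₁ ^ 2) * (l ^ 2 - 2 * m)
          + 27 * (n ^ 2 - (m₁ + n₁) ^ 2)
        > 2 * ((l ^ 2 - 2 * m) ^ 2 - 3 * (m ^ 2 - 2 * l * n - l₁ ^ 2)) ^ ((3 : ℝ) / 2)) :
    ∀ τ : ℝ, 0 ≤ τ → ∀ ν : ℝ,
      (I * ν) ^ 3 + (l : ℂ) * (I * ν) ^ 2 + (m : ℂ) * (I * ν) + (n : ℂ)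
        + ((l₁ : ℂ) * (I * ν) + (m₁ : ℂ) + (n₁ : ℂ)) * Complex.exp (-(I * ν * τ)) ≠ 0 := by
  intro τ hτ ν hcontra
  set P : ℂ := (I * ν) ^ 3 + (l : ℂ) * (I * ν) ^ 2 + (m : ℂ) * (I * ν) + (n : ℂ) with hP
  set Q : ℂ := (l₁ : ℂ) * (I * ν) + (m₁ : ℂ) + (n₁ : ℂ) with hQ
  have hE : ‖Complex.exp (-(I * ν * τ))‖ = 1 := by
    rw [Complex.norm_exp]
    simp
  have habs : ‖P‖ = ‖Q‖ := by
    have : P = -(Q * Complex.exp (-(I * ν * τ))) := by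
      linear_combination hcontra
    rw [this, norm_neg, norm_mul, hE, mul_one]
  have hsq : Complex.normSq P = Complex.normSq Q := by
    rw [← Complex.sq_norm, ← Complex.sq_norm, habs]
  have hPre : P.re = n - l * ν ^ 2 := by simp [hP, mul_pow, pow_succ, Complex.I_mul_I]; ring
  have hPim : P.im = m * ν - ν ^ 3 := by simp [hP, mul_pow, pow_succ, Complex.I_mul_I]; ring
  have hQre : Q.re = m₁ + n₁ := by simp [hQ]
  have hQim : Q.im = l₁ * ν := by simp [hQ]
  rw [Complex.normSq_apply, Complex.normSq_apply, hPre, hPim, hQre, hQim] at hsq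
  have hkey : (ν ^ 2) ^ 3 + (l ^ 2 - 2 * m) * (ν ^ 2) ^ 2
      + (m ^ 2 - 2 * l * n - l₁ ^ 2) * (ν ^ 2) + (n ^ 2 - (m₁ + n₁) ^ 2) = 0 := by
    nlinarith [hsq]
  have := cubic_pos (n ^ 2 - (m₁ + n₁) ^ 2) (m ^ 2 - 2 * l * n - l₁ ^ 2) (l ^ 2 - 2 * m)
    (ν ^ 2) h0 h1 h2 (sq_nonneg ν)
  linarith
end

section
/- Let l, m, n, l₁, m₁, n₁ be real numbers satisfying l² − 2(l₁+m) ≥ 0, (l₁+m)² − 2l(n+m₁) ≥ 0, (n+m₁)² − n₁² ≥ 0, and l(l₁+m) ≠ n + m₁ − n₁. Then for every δ ≥ 0 and every nonzero real ν, (iν)³ + l·(iν)² + (l₁+m)·(iν) + (n+m₁) + n₁·exp(−iνδ) ≠ 0; that is, the characteristic equation with recovery delay δ only has no nonzero purely imaginary roots for any δ ≥ 0. -/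
open Complex

/-- Theorem 3.5(i): under conditions (3.5) and (3.7), the characteristic equation with
recovery delay only, `λ³ + lλ² + (l₁+m)λ + (n+m₁) + n₁ e^{-λδ} = 0`, has no nonzero
purely imaginary roots for any delay `δ ≥ 0`. -/
theorem no_imaginary_roots_recovery_delay (l m n l₁ m₁ n₁ : ℝ)
    (h1 : 0 ≤ l ^ 2 - 2 * (l₁ + m))
    (h2 : 0 ≤ (l₁ + m) ^ 2 - 2 * l * (n + m₁))
    (h3 : 0 ≤ (n + m₁) ^ 2 - n₁ ^ 2)
    (h4 : l * (l₁ + m) ≠ n + m₁ - n₁) :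
    ∀ δ : ℝ, 0 ≤ δ → ∀ ν : ℝ, ν ≠ 0 →
      (I * ν) ^ 3 + (l : ℂ) * (I * ν) ^ 2 + ((l₁ : ℂ) + (m : ℂ)) * (I * ν)
        + ((n : ℂ) + (m₁ : ℂ)) + (n₁ : ℂ) * Complex.exp (-(I * ν * δ)) ≠ 0 := by
  intro δ hδ ν hν heq
  -- Move the exponential term to one side
  have key : (n₁ : ℂ) * Complex.exp (-(I * ν * δ))
      = -((I * ν) ^ 3 + (l : ℂ) * (I * ν) ^ 2 + ((l₁ : ℂ) + (m : ℂ)) * (I * ν)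
        + ((n : ℂ) + (m₁ : ℂ))) := by
    linear_combination heq
  have habs := congrArg (‖·‖) key
  rw [norm_mul, Complex.norm_exp] at habs
  simp only [Complex.neg_re, Complex.mul_re, Complex.mul_im, Complex.I_re, Complex.I_im,
    Complex.ofReal_re, Complex.ofReal_im] at habs
  norm_num at habs
  -- Square the modulus equality
  have hsq := congrArg (· ^ 2) habs
  simp only [← Complex.sq_norm, Complex.sq_norm] at hsq
  rw [_root_.sq_abs, Complex.normSq_apply] at hsq
  simp only [Complex.add_re, Complex.add_im, Complex.mul_re, Complex.mul_im,
    Complex.neg_re, Complex.neg_im, Complex.I_re, Complex.I_im, Complex.ofReal_re,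
    Complex.ofReal_im, pow_succ, pow_zero, one_mul, Complex.one_re, Complex.one_im] at hsq
  ring_nf at hsq
  have hν2 : 0 < ν ^ 2 := by positivity
  nlinarith [sq_nonneg ν, sq_nonneg (ν^2), sq_nonneg (ν^3), mul_nonneg h1 (sq_nonneg (ν^2)),
    mul_nonneg h2 (sq_nonneg ν), pow_pos hν2 3]
end

section
/- Let l, m, n, l₁, m₁, n₁ be real numbers with (n+m₁)² < n₁². Then there exist a real ν > 0 and a real δ ≥ 0 such that (iν)³ + l·(iν)² + (l₁+m)·(iν) + (n+m₁) + n₁·exp(−iνδ) = 0. -/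
open Complex

/-- Theorem 3.5(ii)–(iii): if `(n+m₁)² < n₁²` then the characteristic equation with
recovery delay only acquires a purely imaginary root `iν`, `ν > 0`, at some delay
`δ ≥ 0`. -/
theorem imaginary_root_exists_recovery_delay (l m n l₁ m₁ n₁ : ℝ)
    (h : (n + m₁) ^ 2 < n₁ ^ 2) :
    ∃ ν : ℝ, 0 < ν ∧ ∃ δ : ℝ, 0 ≤ δ ∧
      (I * ν) ^ 3 + (l : ℂ) * (I * ν) ^ 2 + ((l₁ : ℂ) + (m : ℂ)) * (I * ν)
        + ((n : ℂ) + (m₁ : ℂ)) + (n₁ : ℂ) * Complex.exp (-(I * ν * δ)) = 0 := by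
  have hn₁ : n₁ ≠ 0 := by
    intro h0; rw [h0] at h; nlinarith [sq_nonneg (n + m₁)]
  have hn₁' : (n₁ : ℂ) ≠ 0 := Complex.ofReal_ne_zero.2 hn₁
  set c : ℝ := l₁ + m with hc
  set d : ℝ := n + m₁ with hd
  set f : ℝ → ℝ := fun ν => (ν^3 - c*ν)^2 + (l*ν^2 - d)^2 - n₁^2 with hf
  set b : ℝ := |c| + |n₁| + 1 with hb
  have habsc := abs_nonneg c
  have habsn := abs_nonneg n₁
  have hb1 : (1:ℝ) ≤ b := by simp [hb]; linarith
  have hb0 : (0:ℝ) ≤ b := by linarith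
  have hcont : ContinuousOn f (Set.Icc 0 b) := by fun_prop
  have hf0 : f 0 < 0 := by simp [hf]; nlinarith
  have hfb : 0 ≤ f b := by
    have h1 : b^3 - c*b ≥ |n₁| + 1 := by
      have hcb : c ≤ |c| := le_abs_self c
      nlinarith [sq_nonneg (b - 1), sq_nonneg b]
    have h2 : (0:ℝ) ≤ b^3 - c*b := by linarith
    simp only [hf]
    nlinarith [h1, h2, _root_.sq_abs n₁, sq_nonneg (l*b^2 - d), habsn]
  have hmem : (0:ℝ) ∈ Set.Icc (f 0) (f b) := ⟨le_of_lt hf0, hfb⟩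
  obtain ⟨ν, hνmem, hfν⟩ := intermediate_value_Icc hb0 hcont hmem
  have hν : 0 < ν := by
    rcases lt_or_eq_of_le hνmem.1 with h' | h'
    · exact h'
    · exfalso; rw [← h'] at hfν; linarith
  have hmod : (ν^3 - c*ν)^2 + (l*ν^2 - d)^2 = n₁^2 := by
    have := hfν; simp only [hf] at this; linarith
  set w : ℂ := (↑(l*ν^2 - d) : ℂ) + (↑(ν^3 - c*ν) : ℂ) * I with hw
  set u : ℂ := w / (n₁ : ℂ) with hu
  have hnw : Complex.normSq w = n₁^2 := by
    rw [hw, Complex.normSq_add_mul_I]; linarith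
  have hnsq : Complex.normSq u = 1 := by
    rw [hu, Complex.normSq_div, hnw, Complex.normSq_ofReal]
    rw [sq]; field_simp
  have habsu : ‖u‖ = 1 := by
    have h1 : (‖u‖)^2 = 1 := by rw [Complex.sq_norm]; exact hnsq
    exact (pow_eq_one_iff_of_nonneg (norm_nonneg u) two_ne_zero).1 h1
  have huexp : Complex.exp (u.arg * I) = u := by
    have := Complex.norm_mul_exp_arg_mul_I u
    rwa [habsu, ofReal_one, one_mul] at this
  set δ : ℝ := (2 * Real.pi - u.arg) / ν with hδ
  have hδ0 : 0 ≤ δ := by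
    have harg := Complex.arg_le_pi u
    have hpi := Real.pi_pos
    apply div_nonneg _ (le_of_lt hν)
    linarith
  refine ⟨ν, hν, δ, hδ0, ?_⟩
  have hνδ : (ν : ℂ) * (δ : ℂ) = ((2 * Real.pi - u.arg : ℝ) : ℂ) := by
    have hνc : (ν:ℂ) ≠ 0 := Complex.ofReal_ne_zero.2 hν.ne'
    rw [hδ]; push_cast; rw [mul_comm]; exact div_mul_cancel₀ _ hνc
  have hexp : Complex.exp (-(I * ν * δ)) = u := by
    have h3 : -(I * (ν:ℂ) * δ) = (u.arg : ℂ) * I - 2 * Real.pi * I := by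
      rw [mul_assoc, hνδ]; push_cast; ring
    rw [h3, Complex.exp_sub, Complex.exp_two_pi_mul_I, div_one, huexp]
  have hnu : (n₁ : ℂ) * u = w := by
    rw [hu, mul_div_assoc', mul_comm, ← mul_div_assoc', div_self hn₁', mul_one]
  rw [hexp, hnu, hw]
  simp only [hc, hd]
  push_cast
  linear_combination ((ν:ℂ)^3 * I + (l:ℂ) * ν^2) * Complex.I_sq
end

section
/- Let l, m, n, l₁, m₁, n₁ be real numbers with l > 0 and l₁² + 4l(n + |n₁| + |m₁|) ≥ 0. Let τ ≥ 0, δ ≥ 0 and let ν ≥ 0 be a real number such that (iν)³ + l·(iν)² + m·(iν) + n + l₁·(iν)·exp(−iντ) + m₁·exp(−iντ) + n₁·exp(−iν(τ+δ)) = 0. Then ν ≤ (|l₁| + √(l₁² + 4l(n + |n₁| + |m₁|)))/(2l). -/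
open Complex

/-- The key estimate in Theorem 3.6: any nonnegative `ν` giving a purely imaginary root
`iν` of the full characteristic equation satisfies
`ν ≤ (|l₁| + √(l₁² + 4l(n + |n₁| + |m₁|)))/(2l)`. -/
theorem imaginary_root_bound (l m n l₁ m₁ n₁ τ δ ν : ℝ)
    (hl : 0 < l) (hdisc : 0 ≤ l₁ ^ 2 + 4 * l * (n + |n₁| + |m₁|))
    (hτ : 0 ≤ τ) (hδ : 0 ≤ δ) (hν : 0 ≤ ν)
    (h : (I * ν) ^ 3 + (l : ℂ) * (I * ν) ^ 2 + (m : ℂ) * (I * ν) + (n : ℂ)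
        + (l₁ : ℂ) * (I * ν) * Complex.exp (-(I * ν * τ))
        + (m₁ : ℂ) * Complex.exp (-(I * ν * τ))
        + (n₁ : ℂ) * Complex.exp (-(I * ν * (τ + δ))) = 0) :
    ν ≤ (|l₁| + Real.sqrt (l₁ ^ 2 + 4 * l * (n + |n₁| + |m₁|))) / (2 * l) := by
  have e1 : -(I * (ν:ℂ) * τ) = ((-(ν*τ):ℝ):ℂ) * I := by push_cast; ring
  have e2 : -(I * (ν:ℂ) * (τ+δ)) = ((-(ν*(τ+δ)):ℝ):ℂ) * I := by push_cast; ring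
  rw [e1, e2, Complex.exp_mul_I, Complex.exp_mul_I] at h
  simp only [← Complex.ofReal_cos, ← Complex.ofReal_sin, Real.cos_neg, Real.sin_neg] at h
  have hre := congrArg Complex.re h
  simp only [Complex.add_re, Complex.mul_re, Complex.mul_im, pow_succ, Complex.ofReal_re,
    Complex.ofReal_im, Complex.I_re, Complex.I_im, Complex.zero_re, Complex.one_re,
    Complex.one_im, pow_zero, Complex.add_im, one_mul, mul_one, mul_zero, zero_mul, sub_zero,
    zero_sub, zero_add, add_zero, neg_neg, neg_zero] at hre
  -- bound the trig terms
  have h1 : l₁ * Real.sin (ν*τ) ≤ |l₁| := by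
    calc l₁ * Real.sin (ν*τ) ≤ |l₁ * Real.sin (ν*τ)| := le_abs_self _
    _ = |l₁| * |Real.sin (ν*τ)| := abs_mul _ _
    _ ≤ |l₁| * 1 := by
        exact mul_le_mul_of_nonneg_left (Real.abs_sin_le_one _) (abs_nonneg _)
    _ = |l₁| := mul_one _
  have h2 : m₁ * Real.cos (ν*τ) ≤ |m₁| := by
    calc m₁ * Real.cos (ν*τ) ≤ |m₁ * Real.cos (ν*τ)| := le_abs_self _
    _ = |m₁| * |Real.cos (ν*τ)| := abs_mul _ _
    _ ≤ |m₁| * 1 := mul_le_mul_of_nonneg_left (Real.abs_cos_le_one _) (abs_nonneg _)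
    _ = |m₁| := mul_one _
  have h3 : n₁ * Real.cos (ν*(τ+δ)) ≤ |n₁| := by
    calc n₁ * Real.cos (ν*(τ+δ)) ≤ |n₁ * Real.cos (ν*(τ+δ))| := le_abs_self _
    _ = |n₁| * |Real.cos (ν*(τ+δ))| := abs_mul _ _
    _ ≤ |n₁| * 1 := mul_le_mul_of_nonneg_left (Real.abs_cos_le_one _) (abs_nonneg _)
    _ = |n₁| := mul_one _
  have h1' : l₁ * Real.sin (ν*τ) * ν ≤ |l₁| * ν := mul_le_mul_of_nonneg_right h1 hν
  have key : l * ν^2 ≤ |l₁| * ν + (n + |n₁| + |m₁|) := by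
    nlinarith [hre, h1', h2, h3]
  set D := l₁ ^ 2 + 4 * l * (n + |n₁| + |m₁|) with hD
  have hsq : (2*l*ν - |l₁|)^2 ≤ D := by nlinarith [mul_le_mul_of_nonneg_left key hl.le, _root_.sq_abs l₁]
  have hle : 2*l*ν - |l₁| ≤ Real.sqrt D := by
    have ha : 2*l*ν - |l₁| ≤ (_root_.abs (2*l*ν - |l₁|)) := le_abs_self _
    have hb : (_root_.abs (2*l*ν - |l₁|)) = Real.sqrt ((2*l*ν - |l₁|)^2) := (Real.sqrt_sq_eq_abs _).symm
    have hc : Real.sqrt ((2*l*ν - |l₁|)^2) ≤ Real.sqrt D := Real.sqrt_le_sqrt hsq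
    linarith [ha, hb.le, hb.ge, hc]
  have h2l : (0:ℝ) < 2 * l := by linarith
  rw [le_div_iff₀ h2l]
  linarith
end

section
/- Let a, b, b₁, c, d, d₁, r, α be positive real numbers with b₁ ≤ b. Then there exist real numbers x*, y*, z* with y* > 0 satisfying b·x*·y* + (c+d)·x* − α·z* = a, b₁·x*·y* − (d₁+r)·y* = 0, and r·y* = α·z*, if and only if (d₁+r)/b₁ < a/(c+d). Moreover, in that case the solution is unique and given by x* = (d₁+r)/b₁, y* = (b₁·a − (c+d)·(d₁+r))/(b·d₁ + r·(b−b₁)), z* = (r/α)·y*, and it satisfies b·x* − r > 0. -/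
/-- Existence, uniqueness and explicit form of the positive (endemic) equilibrium of the
bilinear model (Section 4, condition (4.3)). -/
theorem endemic_equilibrium (a b b₁ c d d₁ r α : ℝ)
    (ha : 0 < a) (hb : 0 < b) (hb₁ : 0 < b₁) (hc : 0 < c) (hd : 0 < d)
    (hd₁ : 0 < d₁) (hr : 0 < r) (hα : 0 < α) (hbb : b₁ ≤ b) :
    ((∃ x y z : ℝ, 0 < y ∧
        b * x * y + (c + d) * x - α * z = a ∧
        b₁ * x * y - (d₁ + r) * y = 0 ∧
        r * y = α * z) ↔ (d₁ + r) / b₁ < a / (c + d)) ∧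
    ((d₁ + r) / b₁ < a / (c + d) →
      (∀ x y z : ℝ, 0 < y →
          b * x * y + (c + d) * x - α * z = a →
          b₁ * x * y - (d₁ + r) * y = 0 →
          r * y = α * z →
          x = (d₁ + r) / b₁ ∧
          y = (b₁ * a - (c + d) * (d₁ + r)) / (b * d₁ + r * (b - b₁)) ∧
          z = (r / α) * ((b₁ * a - (c + d) * (d₁ + r)) / (b * d₁ + r * (b - b₁))) ∧
          b * x - r > 0)) := by
  have hcd : (0:ℝ) < c + d := by linarith
  have hD : (0:ℝ) < b * d₁ + r * (b - b₁) := by nlinarith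
  have hDne := hD.ne'
  have hb₁ne := hb₁.ne'
  have hcdne := hcd.ne'
  have hαne := hα.ne'
  set N := b₁ * a - (c + d) * (d₁ + r) with hN
  -- condition (4.3) is equivalent to N > 0
  have hcond : ((d₁ + r) / b₁ < a / (c + d)) ↔ 0 < N := by
    rw [div_lt_div_iff₀ hb₁ hcd, hN]
    constructor <;> intro h <;> nlinarith
  -- forward analysis: any solution has this explicit form
  have key : ∀ x y z : ℝ, 0 < y →
      b * x * y + (c + d) * x - α * z = a →
      b₁ * x * y - (d₁ + r) * y = 0 →
      r * y = α * z →
      x = (d₁ + r) / b₁ ∧ y = N / (b * d₁ + r * (b - b₁)) ∧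
      z = (r / α) * (N / (b * d₁ + r * (b - b₁))) ∧ b * x - r > 0 := by
    intro x y z hy h1 h2 h3
    have hx : x = (d₁ + r) / b₁ := by
      have : y * (b₁ * x - (d₁ + r)) = 0 := by ring_nf; linarith [h2]
      have h' : b₁ * x - (d₁ + r) = 0 := by
        rcases mul_eq_zero.mp this with h | h
        · exact absurd h hy.ne'
        · exact h
      field_simp
      linarith
    have hbxr : b * x - r > 0 := by
      rw [hx]
      rw [gt_iff_lt, sub_pos, ← div_lt_iff₀' hb]
      rw [div_lt_div_iff₀ hb hb₁] at *
      nlinarith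
    have hy' : y = N / (b * d₁ + r * (b - b₁)) := by
      rw [eq_div_iff hDne, hN]
      subst hx
      field_simp at h1 ⊢
      nlinarith [h1, h3]
    have hz : z = (r / α) * (N / (b * d₁ + r * (b - b₁))) := by
      rw [← hy']
      field_simp
      linarith [h3]
    exact ⟨hx, hy', hz, hbxr⟩
  constructor
  · rw [hcond]
    constructor
    · rintro ⟨x, y, z, hy, h1, h2, h3⟩
      obtain ⟨hx, hy', -, -⟩ := key x y z hy h1 h2 h3
      have : 0 < N / (b * d₁ + r * (b - b₁)) := hy' ▸ hy
      have h := mul_pos this hD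
      rwa [div_mul_cancel₀ _ hDne] at h
    · intro hNpos
      refine ⟨(d₁ + r) / b₁, N / (b * d₁ + r * (b - b₁)),
        (r / α) * (N / (b * d₁ + r * (b - b₁))), ?_, ?_, ?_, ?_⟩
      · positivity
      · field_simp
        ring
      · field_simp
        ring
      · field_simp
  · intro hc' x y z hy h1 h2 h3
    exact key x y z hy h1 h2 h3
end

section
/- Let a, b, b₁, c, d, d₁, r, α be positive real numbers with a/(c+d) < (d₁+r)/b₁. Let x, y, z : [0,∞) → ℝ be differentiable functions with x(t) ≥ 0, y(t) ≥ 0, z(t) ≥ 0 for all t ≥ 0, satisfying x'(t) = a − b·x(t)·y(t) − (c+d)·x(t) + α·z(t), y'(t) = b₁·x(t)·y(t) − (r+d₁)·y(t), z'(t) = r·y(t) − α·z(t) for all t ≥ 0. Assume in addition that there is a constant K with x(t) ≤ K < (d₁+r)/b₁ for all t ≥ 0. Then y(t) → 0, z(t) → 0, and x(t) → a/(c+d) as t → ∞; that is, the solution converges to the disease-free equilibrium (a/(c+d), 0, 0). -/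
open Filter

lemma anti_aux (f f' : ℝ → ℝ) (T : ℝ)
    (hd : ∀ t ∈ Set.Ici T, HasDerivAt f (f' t) t)
    (h0 : ∀ t ∈ Set.Ici T, f' t ≤ 0) : AntitoneOn f (Set.Ici T) := by
  apply antitoneOn_of_deriv_nonpos (convex_Ici T)
  · exact fun t ht => (hd t ht).continuousAt.continuousWithinAt
  · intro t ht
    exact (hd t (interior_subset ht)).differentiableAt.differentiableWithinAt
  · intro t ht
    rw [(hd t (interior_subset ht)).deriv]
    exact h0 t (interior_subset ht)

lemma exp_decay_tendsto (lam C : ℝ) (hlam : 0 < lam) :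
    Filter.Tendsto (fun t => C * Real.exp (-(lam * t))) atTop (nhds 0) := by
  have h1 : Filter.Tendsto (fun t : ℝ => lam * t) atTop atTop :=
    Filter.Tendsto.const_mul_atTop hlam tendsto_id
  have h2 : Filter.Tendsto (fun t : ℝ => Real.exp (-(lam * t))) atTop (nhds 0) :=
    Real.tendsto_exp_neg_atTop_nhds_zero.comp h1
  simpa using h2.const_mul C

/-- Exponential damping with vanishing forcing: if `u' = -lam * u + p` with `p → 0`,
`lam > 0`, then `u → 0`. -/
lemma decay (lam : ℝ) (hlam : 0 < lam) (u p : ℝ → ℝ)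
    (hu : ∀ t : ℝ, 0 ≤ t → HasDerivAt u (-lam * u t + p t) t)
    (hp : Filter.Tendsto p atTop (nhds 0)) :
    Filter.Tendsto u atTop (nhds 0) := by
  rw [Metric.tendsto_atTop]
  intro ε hε
  have hε2 : 0 < lam * (ε / 4) := by positivity
  obtain ⟨T₀, hT₀⟩ := (Metric.tendsto_atTop.1 hp) (lam * (ε / 4)) hε2
  set T : ℝ := max T₀ 0 with hT
  have hT0 : (0:ℝ) ≤ T := le_max_right _ _
  have hpb : ∀ t ∈ Set.Ici T, |p t| ≤ lam * (ε / 4) := by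
    intro t ht
    have := hT₀ t (le_trans (le_max_left _ _) ht)
    rw [Real.dist_eq, sub_zero] at this
    exact this.le
  set g : ℝ → ℝ := fun t => u t * Real.exp (lam * t) with hg
  have hexpdiff : ∀ t : ℝ, HasDerivAt (fun s : ℝ => Real.exp (lam * s))
      (lam * Real.exp (lam * t)) t := by
    intro t
    have hh := ((hasDerivAt_id t).const_mul lam).exp
    simp only [id_eq, mul_one] at hh
    rw [mul_comm]
    exact hh
  have hgd : ∀ t ∈ Set.Ici T, HasDerivAt g (p t * Real.exp (lam * t)) t := by
    intro t ht
    have h2 := (hu t (le_trans hT0 ht)).mul (hexpdiff t)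
    refine h2.congr_deriv ?_
    ring
  have hexp : ∀ t : ℝ, (0:ℝ) < Real.exp (lam * t) := fun t => Real.exp_pos _
  have hup : AntitoneOn (fun t => g t - (ε/4) * Real.exp (lam * t)) (Set.Ici T) := by
    apply anti_aux _ (fun t => p t * Real.exp (lam * t) - (ε/4) * (lam * Real.exp (lam * t)))
    · intro t ht
      exact (hgd t ht).sub ((hexpdiff t).const_mul (ε/4))
    · intro t ht
      have hpt : p t ≤ lam * (ε/4) := (abs_le.1 (hpb t ht)).2
      nlinarith [hexp t]
  have hlo : AntitoneOn (fun t => -(g t) - (ε/4) * Real.exp (lam * t)) (Set.Ici T) := by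
    apply anti_aux _ (fun t => -(p t * Real.exp (lam * t)) - (ε/4) * (lam * Real.exp (lam * t)))
    · intro t ht
      exact ((hgd t ht).neg).sub ((hexpdiff t).const_mul (ε/4))
    · intro t ht
      have hpt : -(lam * (ε/4)) ≤ p t := (abs_le.1 (hpb t ht)).1
      nlinarith [hexp t]
  have key : ∀ t ∈ Set.Ici T, |u t| ≤ |g T| * Real.exp (-(lam * t)) + ε/2 := by
    intro t ht
    have hTmem : T ∈ Set.Ici T := Set.self_mem_Ici
    have h1 := hup hTmem ht ht
    have h2 := hlo hTmem ht ht
    simp only at h1 h2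
    have hTe : (0:ℝ) ≤ (ε/4) * Real.exp (lam * T) := by positivity
    have e1 : g t ≤ g T + (ε/4) * Real.exp (lam * t) := by linarith
    have e2 : -(g t) ≤ -(g T) + (ε/4) * Real.exp (lam * t) := by linarith
    have hut : u t = g t * Real.exp (-(lam * t)) := by
      rw [hg]
      simp [mul_assoc, ← Real.exp_add]
    have habs : |g t| ≤ |g T| + (ε/4) * Real.exp (lam * t) := by
      rw [abs_le]
      constructor
      · nlinarith [neg_abs_le (g T)]
      · nlinarith [le_abs_self (g T)]
    calc |u t| = |g t| * Real.exp (-(lam * t)) := by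
          rw [hut, abs_mul, abs_of_pos (Real.exp_pos _)]
      _ ≤ (|g T| + (ε/4) * Real.exp (lam * t)) * Real.exp (-(lam * t)) := by
          apply mul_le_mul_of_nonneg_right habs (Real.exp_pos _).le
      _ = |g T| * Real.exp (-(lam * t)) + ε/4 := by
          rw [add_mul, mul_assoc, ← Real.exp_add]
          simp
      _ ≤ |g T| * Real.exp (-(lam * t)) + ε/2 := by linarith
  obtain ⟨N, hN⟩ := (Metric.tendsto_atTop.1 (exp_decay_tendsto lam |g T| hlam)) (ε/4)
    (by positivity)
  refine ⟨max N T, fun t ht => ?_⟩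
  have htT : t ∈ Set.Ici T := le_trans (le_max_right _ _) ht
  have htN := hN t (le_trans (le_max_left _ _) ht)
  rw [Real.dist_eq, sub_zero] at htN ⊢
  have := key t htT
  have h4 : |g T| * Real.exp (-(lam * t)) ≤ |(|g T| * Real.exp (-(lam * t)))| := le_abs_self _
  linarith


/-- Delay-free instance of Theorem 4.2: global asymptotic stability of the disease-free
equilibrium `(a/(c+d), 0, 0)` of the bilinear model when `a/(c+d) < (d₁+r)/b₁`,
assuming the susceptible population stays bounded below the threshold. -/
theorem disease_free_global_stability (a b b₁ c d d₁ r α : ℝ)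
    (ha : 0 < a) (hb : 0 < b) (hb₁ : 0 < b₁) (hc : 0 < c) (hd : 0 < d)
    (hd₁ : 0 < d₁) (hr : 0 < r) (hα : 0 < α)
    (h : a / (c + d) < (d₁ + r) / b₁)
    (x y z : ℝ → ℝ)
    (hx0 : ∀ t : ℝ, 0 ≤ t → 0 ≤ x t)
    (hy0 : ∀ t : ℝ, 0 ≤ t → 0 ≤ y t)
    (hz0 : ∀ t : ℝ, 0 ≤ t → 0 ≤ z t)
    (hx : ∀ t : ℝ, 0 ≤ t →
      HasDerivAt x (a - b * x t * y t - (c + d) * x t + α * z t) t)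
    (hy : ∀ t : ℝ, 0 ≤ t →
      HasDerivAt y (b₁ * x t * y t - (r + d₁) * y t) t)
    (hz : ∀ t : ℝ, 0 ≤ t →
      HasDerivAt z (r * y t - α * z t) t)
    (K : ℝ) (hK : K < (d₁ + r) / b₁) (hxK : ∀ t : ℝ, 0 ≤ t → x t ≤ K) :
    Tendsto y atTop (nhds 0) ∧ Tendsto z atTop (nhds 0) ∧
      Tendsto x atTop (nhds (a / (c + d))) := by
  set lam : ℝ := (r + d₁) - b₁ * K with hlamdef
  have hlam : 0 < lam := by
    have h1 : K * b₁ < d₁ + r := (lt_div_iff₀ hb₁).1 hK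
    simp only [hlamdef]
    nlinarith
  have hexpdiff : ∀ t : ℝ, HasDerivAt (fun s : ℝ => Real.exp (lam * s))
      (lam * Real.exp (lam * t)) t := by
    intro t
    have hh := ((hasDerivAt_id t).const_mul lam).exp
    simp only [id_eq, mul_one] at hh
    rw [mul_comm]
    exact hh
  -- Step 1: y t ≤ y 0 * exp (-(lam t))
  have hganti : AntitoneOn (fun t => y t * Real.exp (lam * t)) (Set.Ici (0:ℝ)) := by
    apply anti_aux _ (fun t => (b₁ * (x t - K)) * y t * Real.exp (lam * t))
    · intro t ht
      have h2 := (hy t ht).mul (hexpdiff t)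
      refine h2.congr_deriv ?_
      simp only [hlamdef]
      ring
    · intro t ht
      have h1 : x t - K ≤ 0 := sub_nonpos.2 (hxK t ht)
      have h2 := hy0 t ht
      have h3 := (Real.exp_pos (lam * t)).le
      have : b₁ * (x t - K) ≤ 0 := mul_nonpos_of_nonneg_of_nonpos hb₁.le h1
      exact mul_nonpos_of_nonpos_of_nonneg (mul_nonpos_of_nonpos_of_nonneg this h2) h3
  have hybound : ∀ t : ℝ, 0 ≤ t → y t ≤ y 0 * Real.exp (-(lam * t)) := by
    intro t ht
    have := hganti (Set.self_mem_Ici) (Set.mem_Ici.2 ht) ht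
    simp only [mul_zero, Real.exp_zero, mul_one] at this
    calc y t = y t * Real.exp (lam * t) * Real.exp (-(lam * t)) := by
          rw [mul_assoc, ← Real.exp_add]; simp
      _ ≤ y 0 * Real.exp (-(lam * t)) :=
          mul_le_mul_of_nonneg_right this (Real.exp_pos _).le
  have hytend : Tendsto y atTop (nhds 0) := by
    have hle : ∀ᶠ t in atTop, y t ≤ y 0 * Real.exp (-(lam * t)) :=
      eventually_atTop.2 ⟨0, fun t ht => hybound t ht⟩
    have hge : ∀ᶠ t in atTop, 0 ≤ y t :=
      eventually_atTop.2 ⟨0, fun t ht => hy0 t ht⟩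
    exact tendsto_of_tendsto_of_tendsto_of_le_of_le' tendsto_const_nhds
      (exp_decay_tendsto lam (y 0) hlam) hge hle
  -- Step 2: z → 0
  have hztend : Tendsto z atTop (nhds 0) := by
    apply decay α hα z (fun t => r * y t)
    · intro t ht
      have := hz t ht
      convert this using 1
      ring
    · simpa using hytend.const_mul r
  -- Step 3: x → a/(c+d)
  have hcd : (0:ℝ) < c + d := by linarith
  have hutend : Tendsto (fun t => x t - a / (c + d)) atTop (nhds 0) := by
    apply decay (c + d) hcd _ (fun t => -(b * x t * y t) + α * z t)
    · intro t ht
      have h1 := (hx t ht).sub_const (a / (c + d))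
      refine h1.congr_deriv ?_
      field_simp
      ring
    · have hxy : Tendsto (fun t => b * x t * y t) atTop (nhds 0) := by
        have hle : ∀ᶠ t in atTop, b * x t * y t ≤ b * K * y t := by
          apply eventually_atTop.2 ⟨0, fun t ht => ?_⟩
          have h1 := hxK t ht
          have h2 := hy0 t ht
          nlinarith [mul_nonneg (mul_nonneg hb.le (sub_nonneg.2 h1)) h2]
        have hge : ∀ᶠ t in atTop, 0 ≤ b * x t * y t := by
          apply eventually_atTop.2 ⟨0, fun t ht => ?_⟩
          have h1 := hx0 t ht
          have h2 := hy0 t ht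
          positivity
        exact tendsto_of_tendsto_of_tendsto_of_le_of_le' tendsto_const_nhds
          (by simpa using hytend.const_mul (b * K)) hge hle
      have := (hxy.neg).add (hztend.const_mul α)
      simpa using this
  refine ⟨hytend, hztend, ?_⟩
  have := hutend.add_const (a / (c + d))
  simpa using this
end
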